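/- arXiv:2105.07922 — 3 statements merged into one kernel-verified Lean document; each statement's English description precedes it below -/
import Mathlib

section
/- Let p > 0 and suppose z_1,...,z_n ∈ ℂ satisfy: for all y ≥ 0, #{i : |z_i| ≤ y} ≤ C·y² for a constant C > 0. Then ∑_{i=1}^n |z_i|^p ≥ (2/(p+2)) · n · (n/C)^{p/2}. -/
open Finset

/-- `∑_{k=1}^n k^q ≥ n^{q+1}/(q+1)` for `q ≥ 0`. -/
lemma sum_rpow_ge (q : ℝ) (hq : 0 ≤ q) :
    ∀ n : ℕ, (n : ℝ) ^ (q + 1) / (q + 1) ≤ ∑ k ∈ range n, ((k : ℝ) + 1) ^ q := by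
  intro n
  induction n with
  | zero =>
    simp [Real.zero_rpow (by linarith : q + 1 ≠ 0)]
  | succ n ih =>
    rw [sum_range_succ]
    have hN : (0 : ℝ) < (n : ℝ) + 1 := by positivity
    have hber : 1 + (q + 1) * (-(1 / ((n : ℝ) + 1))) ≤ (1 + (-(1 / ((n : ℝ) + 1)))) ^ (q + 1) := by
      apply one_add_mul_self_le_rpow_one_add
      · rw [neg_le, neg_neg]
        rw [div_le_one hN]; linarith
      · linarith
    have h1 : (1 : ℝ) + (-(1 / ((n : ℝ) + 1))) = (n : ℝ) / ((n : ℝ) + 1) := by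
      field_simp; ring
    rw [h1] at hber
    have h2 : ((n : ℝ) / ((n : ℝ) + 1)) ^ (q + 1)
        = (n : ℝ) ^ (q + 1) / ((n : ℝ) + 1) ^ (q + 1) := by
      rw [Real.div_rpow (Nat.cast_nonneg n) (le_of_lt hN)]
    rw [h2] at hber
    -- multiply by ((n:ℝ)+1)^(q+1)
    have hNq : (0 : ℝ) < ((n : ℝ) + 1) ^ (q + 1) := Real.rpow_pos_of_pos hN _
    have hmul := mul_le_mul_of_nonneg_right hber (le_of_lt hNq)
    rw [div_mul_cancel₀ _ (ne_of_gt hNq)] at hmul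
    -- ((n:ℝ)+1)^(q+1) / ((n:ℝ)+1) = ((n:ℝ)+1)^q
    have h3 : ((n : ℝ) + 1) ^ (q + 1) = ((n : ℝ) + 1) ^ q * ((n : ℝ) + 1) := by
      rw [Real.rpow_add hN, Real.rpow_one]
    have h4 : (1 + (q + 1) * (-(1 / ((n : ℝ) + 1)))) * ((n : ℝ) + 1) ^ (q + 1)
        = ((n : ℝ) + 1) ^ (q + 1) - (q + 1) * ((n : ℝ) + 1) ^ q := by
      rw [h3]; field_simp; ring
    rw [h4] at hmul
    have key : ((n : ℝ) + 1) ^ (q + 1) ≤ (n : ℝ) ^ (q + 1) + (q + 1) * ((n : ℝ) + 1) ^ q := by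
      linarith
    have hq1 : (0 : ℝ) < q + 1 := by linarith
    push_cast
    rw [div_le_iff₀ hq1] at ih ⊢
    calc ((n : ℝ) + 1) ^ (q + 1) ≤ (n : ℝ) ^ (q + 1) + (q + 1) * ((n : ℝ) + 1) ^ q := key
      _ ≤ (∑ k ∈ range n, ((k : ℝ) + 1) ^ q) * (q + 1) + (q + 1) * ((n : ℝ) + 1) ^ q := by
          linarith
      _ = (∑ k ∈ range n, ((k : ℝ) + 1) ^ q + ((n : ℝ) + 1) ^ q) * (q + 1) := by ring

theorem stmt_5 (n : ℕ) (p C : ℝ) (hp : 0 < p) (hC : 0 < C) (z : Fin n → ℂ)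
    (hcount : ∀ y : ℝ, 0 ≤ y →
      ((Finset.univ.filter fun i => ‖z i‖ ≤ y).card : ℝ) ≤ C * y ^ 2) :
    ∑ i, ‖z i‖ ^ p ≥ (2 / (p + 2)) * n * ((n : ℝ) / C) ^ (p / 2) := by
  set r : Fin n → ℝ := fun i => ‖z i‖ with hr
  have hr0 : ∀ i, 0 ≤ r i := fun i => norm_nonneg _
  set σ := Tuple.sort r with hσ
  have hmono : Monotone (r ∘ σ) := Tuple.monotone_sort r
  -- pointwise lower bound for sorted values
  have hlow : ∀ k : Fin n, (((k : ℕ) : ℝ) + 1) / C ≤ (r (σ k)) ^ 2 := by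
    intro k
    have hsub : (Finset.Iic k).image σ ⊆ Finset.univ.filter fun i => r i ≤ r (σ k) := by
      intro i hi
      simp only [Finset.mem_image, Finset.mem_Iic] at hi
      obtain ⟨j, hj, rfl⟩ := hi
      simp only [Finset.mem_filter, Finset.mem_univ, true_and]
      exact hmono hj
    have hcard : (Finset.Iic k).card = (k : ℕ) + 1 := Fin.card_Iic k
    have himg : ((Finset.Iic k).image σ).card = (k : ℕ) + 1 := by
      rw [Finset.card_image_of_injective _ σ.injective, hcard]
    have h1 : ((k : ℕ) : ℝ) + 1 ≤ C * (r (σ k)) ^ 2 := by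
      have := hcount (r (σ k)) (hr0 _)
      have h2 : ((k : ℕ) + 1 : ℕ) ≤ (Finset.univ.filter fun i => r i ≤ r (σ k)).card := by
        rw [← himg]; exact Finset.card_le_card hsub
      calc ((k : ℕ) : ℝ) + 1 = (((k : ℕ) + 1 : ℕ) : ℝ) := by push_cast; ring
        _ ≤ ((Finset.univ.filter fun i => r i ≤ r (σ k)).card : ℝ) := by exact_mod_cast h2
        _ ≤ C * (r (σ k)) ^ 2 := this
    rw [div_le_iff₀ hC] at *
    linarith [h1]
  have hlow' : ∀ k : Fin n, ((((k : ℕ) : ℝ) + 1) / C) ^ (p / 2) ≤ r (σ k) ^ p := by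
    intro k
    have h0 : (0 : ℝ) ≤ (((k : ℕ) : ℝ) + 1) / C := by positivity
    have hs : Real.sqrt ((((k : ℕ) : ℝ) + 1) / C) ≤ r (σ k) := by
      have := Real.sqrt_le_sqrt (hlow k)
      rwa [Real.sqrt_sq (hr0 _)] at this
    have := Real.rpow_le_rpow (Real.sqrt_nonneg _) hs (le_of_lt hp)
    calc ((((k : ℕ) : ℝ) + 1) / C) ^ (p / 2)
        = (Real.sqrt ((((k : ℕ) : ℝ) + 1) / C)) ^ p := by
          rw [Real.sqrt_eq_rpow, ← Real.rpow_mul h0]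
          congr 1; ring
      _ ≤ r (σ k) ^ p := this
  -- sum over permutation
  have hsum : ∑ i, r i ^ p = ∑ k, r (σ k) ^ p := (Equiv.sum_comp σ fun i => r i ^ p).symm
  have hsum2 : ∑ k : Fin n, ((((k : ℕ) : ℝ) + 1) / C) ^ (p / 2) ≤ ∑ k, r (σ k) ^ p :=
    Finset.sum_le_sum fun k _ => hlow' k
  have hsum3 : ∑ k : Fin n, ((((k : ℕ) : ℝ) + 1) / C) ^ (p / 2)
      = (∑ k ∈ range n, (((k : ℕ) : ℝ) + 1) ^ (p / 2)) / C ^ (p / 2) := by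
    rw [Finset.sum_div, Fin.sum_univ_eq_sum_range (fun k => ((((k : ℕ) : ℝ) + 1) / C) ^ (p / 2))]
    refine Finset.sum_congr rfl fun k _ => ?_
    rw [Real.div_rpow (by positivity) (le_of_lt hC)]
  have hq : (0 : ℝ) ≤ p / 2 := by linarith
  have hkey := sum_rpow_ge (p / 2) hq n
  have hCp : (0 : ℝ) < C ^ (p / 2) := Real.rpow_pos_of_pos hC _
  have hfinal : (2 / (p + 2)) * n * ((n : ℝ) / C) ^ (p / 2)
      ≤ (∑ k ∈ range n, (((k : ℕ) : ℝ) + 1) ^ (p / 2)) / C ^ (p / 2) := by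
    have hdiv : ((n : ℝ) / C) ^ (p / 2) = (n : ℝ) ^ (p / 2) / C ^ (p / 2) :=
      Real.div_rpow (Nat.cast_nonneg n) (le_of_lt hC) _
    have hnn : (n : ℝ) ^ (p / 2 + 1) = (n : ℝ) ^ (p / 2) * n := by
      rw [Real.rpow_add' (Nat.cast_nonneg n) (by linarith), Real.rpow_one]
    have h22 : 2 / (p + 2) = 1 / (p / 2 + 1) := by
      rw [div_eq_div_iff (by linarith) (by linarith)]; ring
    rw [hdiv, h22]
    have heq : 1 / (p / 2 + 1) * n * ((n : ℝ) ^ (p / 2) / C ^ (p / 2))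
        = ((n : ℝ) ^ (p / 2 + 1) / (p / 2 + 1)) / C ^ (p / 2) := by
      rw [hnn]; field_simp
    rw [heq]
    gcongr
  rw [ge_iff_le, hsum]
  calc (2 / (p + 2)) * n * ((n : ℝ) / C) ^ (p / 2)
      ≤ (∑ k ∈ range n, (((k : ℕ) : ℝ) + 1) ^ (p / 2)) / C ^ (p / 2) := hfinal
    _ = ∑ k : Fin n, ((((k : ℕ) : ℝ) + 1) / C) ^ (p / 2) := hsum3.symm
    _ ≤ ∑ k, r (σ k) ^ p := hsum2
end

section
/- For any finite set of complex numbers z_1,...,z_n (n ≥ 2) that is 1-separated, and for any p > 0, if every disk of radius y about the origin contains at most (2π/√3)·y² + ε·y² of the points (for all y larger than some y_0 and a fixed ε > 0), then (∑_{i=1}^n |z_i|^p)^{1/p} ≥ (2/(p+2))^{1/p} · (√3/(2π + √3 ε))^{1/2} · n^{1/2 + 1/p} + o(n^{1/2+1/p}) as n → ∞. -/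
open Filter intervalIntegral
set_option maxHeartbeats 1000000

lemma sum_rpow_lower (q : ℝ) (hq : 0 ≤ q) (n : ℕ) :
    (n : ℝ) ^ (q + 1) / (q + 1) ≤ ∑ i ∈ Finset.range n, ((i : ℝ) + 1) ^ q := by
  have hmono : MonotoneOn (fun x : ℝ => x ^ q) (Set.Icc (0:ℝ) (0 + n)) := by
    intro a ha b hb hab
    exact Real.rpow_le_rpow ha.1 hab hq
  have h := hmono.integral_le_sum
  rw [integral_rpow (Or.inl (by linarith : (-1:ℝ) < q))] at h
  rw [Real.zero_rpow (by positivity : q + 1 ≠ 0)] at h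
  calc (n:ℝ) ^ (q+1) / (q+1) = ((n:ℝ)^(q+1) - 0)/(q+1) := by ring
    _ = ((0+(n:ℝ))^(q+1) - 0)/(q+1) := by rw [zero_add]
    _ ≤ ∑ i ∈ Finset.range n, ((0:ℝ) + ((i:ℕ)+1 : ℕ)) ^ q := h
    _ = ∑ i ∈ Finset.range n, ((i : ℝ) + 1) ^ q := by
        apply Finset.sum_congr rfl; intro i _; push_cast; ring_nf

theorem stmt_6 (p ε y₀ : ℝ) (hp : 0 < p) (hε : 0 < ε)
    (z : (n : ℕ) → Fin n → ℂ)
    (hsep : ∀ n, ∀ i j : Fin n, i ≠ j → 1 ≤ ‖z n i - z n j‖)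
    (hcount : ∀ n, ∀ y : ℝ, y₀ ≤ y →
      ((Finset.univ.filter fun i => ‖z n i‖ ≤ y).card : ℝ) ≤
        (2 * Real.pi / Real.sqrt 3) * y ^ 2 + ε * y ^ 2) :
    ∃ e : ℕ → ℝ,
      (e =o[atTop] fun n : ℕ => (n : ℝ) ^ ((1:ℝ)/2 + 1/p)) ∧
      ∀ n : ℕ, 2 ≤ n →
        (∑ i, ‖z n i‖ ^ p) ^ (1/p) ≥
          (2 / (p + 2)) ^ (1/p) *
            (Real.sqrt 3 / (2 * Real.pi + Real.sqrt 3 * ε)) ^ ((1:ℝ)/2) *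
            (n : ℝ) ^ ((1:ℝ)/2 + 1/p) + e n := by
  have hp' : p ≠ 0 := ne_of_gt hp
  have hs3 : (0:ℝ) < Real.sqrt 3 := Real.sqrt_pos.mpr (by norm_num)
  have hpi : 0 < Real.pi := Real.pi_pos
  set q : ℝ := p / 2 with hq
  have hq0 : 0 ≤ q := by positivity
  set α : ℝ := (1:ℝ)/2 + 1/p with hα
  have hα0 : 0 < α := by positivity
  set C : ℝ := 2 * Real.pi / Real.sqrt 3 + ε with hCdef
  have hC0 : 0 < C := by positivity
  set B : ℝ := C⁻¹ with hBdef
  have hB0 : 0 < B := by positivity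
  have hC2 : C = (2 * Real.pi + Real.sqrt 3 * ε) / Real.sqrt 3 := by
    rw [hCdef]; field_simp
  have hBeq : B = Real.sqrt 3 / (2 * Real.pi + Real.sqrt 3 * ε) := by
    rw [hBdef, hC2, inv_div]
  set c : ℝ := (2 / (p + 2)) ^ (1/p) *
      (Real.sqrt 3 / (2 * Real.pi + Real.sqrt 3 * ε)) ^ ((1:ℝ)/2) with hcdef
  have h2p2 : (0:ℝ) < 2 / (p + 2) := by positivity
  have hc0 : 0 < c := by
    rw [hcdef, ← hBeq]
    exact mul_pos (Real.rpow_pos_of_pos h2p2 _) (Real.rpow_pos_of_pos hB0 _)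
  have hcp : c ^ p = 2 / (p + 2) * B ^ q := by
    rw [hcdef, ← hBeq, Real.mul_rpow (Real.rpow_nonneg (le_of_lt h2p2) _)
      (Real.rpow_nonneg (le_of_lt hB0) _), ← Real.rpow_mul (le_of_lt h2p2),
      ← Real.rpow_mul (le_of_lt hB0), one_div_mul_cancel hp', Real.rpow_one]
    congr 1
    rw [hq]; ring
  set y₁ : ℝ := max y₀ 0 with hy₁
  set K₀ : ℝ := C * y₁ ^ 2 with hK₀
  have hK₀0 : 0 ≤ K₀ := by positivity
  set M : ℕ := ⌈K₀⌉₊ with hM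
  set D : ℝ := B ^ q * M with hD
  have hD0 : 0 ≤ D := by positivity
  set S : ℕ → ℝ := fun n => ∑ i, ‖z n i‖ ^ p with hS
  have hS0 : ∀ n, 0 ≤ S n := fun n =>
    Finset.sum_nonneg fun i _ => Real.rpow_nonneg (norm_nonneg _) p
  -- the key counting lower bound
  have key : ∀ n : ℕ, c ^ p * (n:ℝ) ^ (q + 1) - D * (n:ℝ) ^ q ≤ S n := by
    intro n
    set f : Fin n → ℝ := fun i => ‖z n i‖ with hf
    have hf0 : ∀ i, 0 ≤ f i := fun i => norm_nonneg _
    set σ := Tuple.sort f with hσ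
    have hmono : Monotone (f ∘ σ) := Tuple.monotone_sort f
    have hN : ∀ k : Fin n, ((k:ℕ) + 1 : ℝ) ≤
        ((Finset.univ.filter fun i => ‖z n i‖ ≤ f (σ k)).card : ℝ) := by
      intro k
      have h1 : (Finset.Iic k).card = (k:ℕ) + 1 := by rw [Fin.card_Iic]
      have h2 : (Finset.Iic k).card ≤
          (Finset.univ.filter fun i => ‖z n i‖ ≤ f (σ k)).card := by
        apply Finset.card_le_card_of_injOn σ
        · intro j hj
          rw [Finset.mem_coe, Finset.mem_filter]
          exact ⟨Finset.mem_univ _, hmono (Finset.mem_Iic.mp hj)⟩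
        · exact σ.injective.injOn
      have h3 : (k:ℕ) + 1 ≤ (Finset.univ.filter fun i => ‖z n i‖ ≤ f (σ k)).card := h1 ▸ h2
      exact_mod_cast h3
    have claim : ∀ k : Fin n, K₀ < (k:ℕ) + 1 → ((k:ℕ) + 1 : ℝ) * B ≤ f (σ k) ^ 2 := by
      intro k hk
      have hy₁f : y₁ ≤ f (σ k) := by
        by_contra hlt
        push_neg at hlt
        have hsub : (Finset.univ.filter fun i => ‖z n i‖ ≤ f (σ k)) ⊆
            (Finset.univ.filter fun i => ‖z n i‖ ≤ y₁) := by
          intro i hi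
          simp only [Finset.mem_filter] at *
          exact ⟨hi.1, le_trans hi.2 (le_of_lt hlt)⟩
        have hc1 := hcount n y₁ (le_max_left _ _)
        have hcard := Finset.card_le_card hsub
        have hcard' : ((Finset.univ.filter fun i => ‖z n i‖ ≤ f (σ k)).card : ℝ) ≤
            ((Finset.univ.filter fun i => ‖z n i‖ ≤ y₁).card : ℝ) := by
          exact_mod_cast hcard
        have hup : ((k:ℕ) + 1 : ℝ) ≤ K₀ := by
          have h6 := le_trans (le_trans (hN k) hcard') hc1
          have h7 : K₀ = 2 * Real.pi / Real.sqrt 3 * y₁ ^ 2 + ε * y₁ ^ 2 := by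
            rw [hK₀, hCdef]; ring
          rw [h7]; linarith
        linarith
      have hy₀f : y₀ ≤ f (σ k) := le_trans (le_max_left _ _) hy₁f
      have hc2 := hcount n (f (σ k)) hy₀f
      have h3 : ((k:ℕ) + 1 : ℝ) ≤ C * f (σ k) ^ 2 := by
        have h6 := le_trans (hN k) hc2
        have h7 : C * f (σ k) ^ 2 = 2 * Real.pi / Real.sqrt 3 * f (σ k) ^ 2 + ε * f (σ k) ^ 2 := by
          rw [hCdef]; ring
        rw [h7]; linarith
      have h4 : ((k:ℕ) + 1 : ℝ) * B ≤ (C * f (σ k) ^ 2) * B :=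
        mul_le_mul_of_nonneg_right h3 (le_of_lt hB0)
      calc ((k:ℕ) + 1 : ℝ) * B ≤ (C * f (σ k) ^ 2) * B := h4
        _ = f (σ k) ^ 2 := by rw [hBdef]; field_simp
    have hterm : ∀ k : Fin n, K₀ < (k:ℕ) + 1 →
        (((k:ℕ) + 1 : ℝ) * B) ^ q ≤ f (σ k) ^ p := by
      intro k hk
      have h1 := claim k hk
      calc (((k:ℕ)+1:ℝ) * B) ^ q ≤ (f (σ k) ^ 2) ^ q :=
            Real.rpow_le_rpow (by positivity) h1 hq0
        _ = f (σ k) ^ p := by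
            rw [← Real.rpow_natCast (f (σ k)) 2, ← Real.rpow_mul (hf0 _)]
            congr 1
            rw [hq]; push_cast; ring
    have hsum1 : S n = ∑ k, f (σ k) ^ p := (Equiv.sum_comp σ (fun i => f i ^ p)).symm
    set F : Finset (Fin n) := Finset.univ.filter (fun k => K₀ < (k:ℕ) + 1) with hF
    have hstep1 : ∑ k ∈ F, (((k:ℕ)+1:ℝ) * B) ^ q ≤ S n := by
      rw [hsum1]
      calc ∑ k ∈ F, (((k:ℕ)+1:ℝ)*B)^q ≤ ∑ k ∈ F, f (σ k) ^ p :=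
            Finset.sum_le_sum (fun k hk => hterm k (Finset.mem_filter.mp hk).2)
        _ ≤ ∑ k, f (σ k) ^ p :=
            Finset.sum_le_sum_of_subset_of_nonneg (Finset.filter_subset _ _)
              (fun k _ _ => Real.rpow_nonneg (hf0 _) p)
    have hstep2 : B ^ q * ∑ k ∈ F, ((k:ℕ)+1:ℝ)^q = ∑ k ∈ F, (((k:ℕ)+1:ℝ)*B)^q := by
      rw [Finset.mul_sum]
      apply Finset.sum_congr rfl
      intro k _
      rw [Real.mul_rpow (by positivity) (le_of_lt hB0)]
      ring
    set G : Finset (Fin n) := Finset.univ.filter (fun k : Fin n => ¬ (K₀ < (k:ℕ) + 1)) with hG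
    have hcompl : ∑ k ∈ G, ((k:ℕ)+1:ℝ)^q ≤ (M:ℝ) * (n:ℝ)^q := by
      have hGcard : G.card ≤ M := by
        rw [← Finset.card_range M]
        apply Finset.card_le_card_of_injOn (fun k : Fin n => (k : ℕ))
        · intro k hk
          rw [Finset.mem_coe, Finset.mem_filter] at hk
          have hk2 : ((k:ℕ) + 1 : ℝ) ≤ K₀ := not_lt.mp hk.2
          have hk3 : ((k:ℕ) : ℝ) < (M : ℝ) := lt_of_lt_of_le (by linarith) (Nat.le_ceil K₀)
          rw [Finset.mem_coe, Finset.mem_range]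
          exact_mod_cast hk3
        · exact Fin.val_injective.injOn
      calc ∑ k ∈ G, ((k:ℕ)+1:ℝ)^q ≤ ∑ _k ∈ G, (n:ℝ)^q := by
            apply Finset.sum_le_sum
            intro k _
            apply Real.rpow_le_rpow (by positivity) _ hq0
            have : (k:ℕ) + 1 ≤ n := k.2
            exact_mod_cast this
        _ = G.card * (n:ℝ)^q := by rw [Finset.sum_const, nsmul_eq_mul]
        _ ≤ (M:ℝ) * (n:ℝ)^q := by
            apply mul_le_mul_of_nonneg_right _ (Real.rpow_nonneg (Nat.cast_nonneg n) q)
            exact_mod_cast hGcard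
    have hsplit : ∑ k ∈ F, ((k:ℕ)+1:ℝ)^q + ∑ k ∈ G, ((k:ℕ)+1:ℝ)^q
        = ∑ k : Fin n, ((k:ℕ)+1:ℝ)^q :=
      Finset.sum_filter_add_sum_filter_not _ _ _
    have huniv : ∑ k : Fin n, ((k:ℕ)+1:ℝ)^q = ∑ i ∈ Finset.range n, ((i:ℝ)+1)^q :=
      Fin.sum_univ_eq_sum_range (fun i => ((i:ℝ)+1)^q) n
    have hint := sum_rpow_lower q hq0 n
    have hq1 : (n:ℝ) ^ (q+1) / (q+1) = 2/(p+2) * (n:ℝ)^(q+1) := by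
      rw [hq]; field_simp
    have hFlow : 2/(p+2) * (n:ℝ)^(q+1) - (M:ℝ) * (n:ℝ)^q ≤ ∑ k ∈ F, ((k:ℕ)+1:ℝ)^q := by
      have h5 : 2/(p+2) * (n:ℝ)^(q+1) ≤ ∑ k : Fin n, ((k:ℕ)+1:ℝ)^q := by
        rw [huniv, ← hq1]; exact hint
      linarith [hcompl, hsplit.symm ▸ h5]
    have hBq : (0:ℝ) ≤ B ^ q := Real.rpow_nonneg (le_of_lt hB0) q
    calc c ^ p * (n:ℝ)^(q+1) - D * (n:ℝ)^q
        = B ^ q * (2/(p+2) * (n:ℝ)^(q+1) - (M:ℝ) * (n:ℝ)^q) := by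
          rw [hcp, hD]; ring
      _ ≤ B ^ q * ∑ k ∈ F, ((k:ℕ)+1:ℝ)^q := mul_le_mul_of_nonneg_left hFlow hBq
      _ = ∑ k ∈ F, (((k:ℕ)+1:ℝ)*B)^q := hstep2
      _ ≤ S n := hstep1
  set u : ℕ → ℝ := fun n => (max (c ^ p - D / n) 0) ^ (1/p) with hu
  set e : ℕ → ℝ := fun n => min (S n ^ (1/p) - c * (n:ℝ) ^ α) 0 with he
  have hα_eq : (q + 1) * (1/p) = α := by
    rw [hq, hα]; field_simp
  have hcppos : 0 < c ^ p := Real.rpow_pos_of_pos hc0 p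
  have hcpc : (c ^ p) ^ (1/p) = c := by
    rw [← Real.rpow_mul (le_of_lt hc0), mul_one_div, div_self hp', Real.rpow_one]
  have hulec : ∀ n : ℕ, u n ≤ c := by
    intro n
    have h1 : max (c ^ p - D / n) 0 ≤ c ^ p := by
      apply max_le _ (le_of_lt hcppos)
      have h2 : 0 ≤ D / (n:ℝ) := by positivity
      linarith
    calc u n ≤ (c ^ p) ^ (1/p) := Real.rpow_le_rpow (le_max_right _ _) h1 (by positivity)
      _ = c := hcpc
  have hlow : ∀ n : ℕ, 1 ≤ n → (u n - c) * (n:ℝ) ^ α ≤ e n := by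
    intro n hn
    have hn0 : (0:ℝ) < n := by exact_mod_cast hn
    have hnα : (0:ℝ) < (n:ℝ) ^ α := Real.rpow_pos_of_pos hn0 α
    have h1 : u n * (n:ℝ) ^ α ≤ S n ^ (1/p) := by
      have hfac : (c ^ p - D / n) * (n:ℝ) ^ (q+1) = c ^ p * (n:ℝ)^(q+1) - D * (n:ℝ)^q := by
        have hx : (n:ℝ) ^ (q+1) = (n:ℝ)^q * n := by
          rw [Real.rpow_add hn0, Real.rpow_one]
        rw [hx]
        field_simp
      have h2 : max (c ^ p - D / n) 0 * (n:ℝ)^(q+1) ≤ S n := by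
        rcases le_total (c ^ p - D / n) 0 with h | h
        · rw [max_eq_right h]; simpa using hS0 n
        · rw [max_eq_left h, hfac]; exact key n
      have h3 : (max (c ^ p - D / n) 0 * (n:ℝ)^(q+1)) ^ (1/p) ≤ S n ^ (1/p) :=
        Real.rpow_le_rpow (by positivity) h2 (by positivity)
      have hnpow : ((n:ℝ)^(q+1)) ^ (1/p) = (n:ℝ)^α := by
        rw [← Real.rpow_mul (le_of_lt hn0), hα_eq]
      calc u n * (n:ℝ)^α
          = (max (c^p - D/(n:ℝ)) 0) ^ (1/p) * ((n:ℝ)^(q+1)) ^ (1/p) := by rw [hnpow]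
        _ = (max (c^p - D/(n:ℝ)) 0 * (n:ℝ)^(q+1)) ^ (1/p) :=
            (Real.mul_rpow (le_max_right _ _) (by positivity)).symm
        _ ≤ S n ^ (1/p) := h3
    apply le_min
    · calc (u n - c) * (n:ℝ)^α = u n * (n:ℝ)^α - c * (n:ℝ)^α := by ring
        _ ≤ S n ^ (1/p) - c * (n:ℝ)^α := by linarith
    · have h4 : u n - c ≤ 0 := by linarith [hulec n]
      have h5 := mul_le_mul_of_nonneg_right h4 (le_of_lt hnα)
      simpa using h5
  have hutend : Tendsto u atTop (nhds c) := by
    have h1 : Tendsto (fun n : ℕ => c ^ p - D / n) atTop (nhds (c ^ p)) := by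
      have h0 := tendsto_const_div_atTop_nhds_zero_nat D
      simpa using (tendsto_const_nhds.sub h0)
    have h2 : Tendsto (fun n : ℕ => max (c ^ p - D / n) 0) atTop (nhds (max (c^p) 0)) :=
      h1.max tendsto_const_nhds
    rw [max_eq_left (le_of_lt hcppos)] at h2
    have hcont : ContinuousAt (fun x : ℝ => x ^ (1/p)) (c ^ p) :=
      Real.continuousAt_rpow_const _ _ (Or.inl (ne_of_gt hcppos))
    have h3 := (hcont.tendsto.comp h2)
    rw [hcpc] at h3
    exact h3
  refine ⟨e, ?_, ?_⟩
  · rw [Asymptotics.isLittleO_iff]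
    intro δ hδ
    have hdiff : Tendsto (fun n : ℕ => c - u n) atTop (nhds 0) := by
      have h0 := (tendsto_const_nhds (x := c) (f := atTop (α := ℕ))).sub hutend
      simpa using h0
    have hev : ∀ᶠ n : ℕ in atTop, c - u n < δ :=
      hdiff.eventually_lt_const hδ
    filter_upwards [hev, eventually_ge_atTop 1] with n h1 h2
    have hn0 : (0:ℝ) < n := by exact_mod_cast h2
    have hnα : (0:ℝ) ≤ (n:ℝ)^α := le_of_lt (Real.rpow_pos_of_pos hn0 α)
    have he1 : e n ≤ 0 := min_le_right _ _
    have he2 := hlow n h2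
    rw [Real.norm_eq_abs, Real.norm_eq_abs, abs_of_nonpos he1, abs_of_nonneg hnα]
    have hr : (c - u n) * (n:ℝ)^α = -((u n - c) * (n:ℝ)^α) := by ring
    calc -(e n) ≤ (c - u n) * (n:ℝ)^α := by rw [hr]; linarith
      _ ≤ δ * (n:ℝ)^α := mul_le_mul_of_nonneg_right (le_of_lt h1) hnα
  · intro n hn
    have h1 : e n ≤ S n ^ (1/p) - c * (n:ℝ)^α := min_le_left _ _
    have h2 : c * (n:ℝ)^α + e n ≤ S n ^ (1/p) := by linarith
    exact h2
end

section
/- Let L ⊂ ℝ² be a lattice with covolume d > 0. Then the number of lattice points in the closed disk of radius r about the origin satisfies #(L ∩ B_r) = π r²/d + O(r) as r → ∞. In particular #(L ∩ B_r)/r² → π/d. -/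
open Filter MeasureTheory Set
open scoped ENNReal NNReal

namespace Stmt13

noncomputable def T (u v : ℂ) : ℂ →ₗ[ℝ] ℂ where
  toFun x := x.re * u + x.im * v
  map_add' x y := by
    simp only [Complex.add_re, Complex.add_im, Complex.ofReal_add]; ring
  map_smul' c x := by
    simp only [RingHom.id_apply, Complex.real_smul, Complex.mul_re, Complex.mul_im,
      Complex.ofReal_re, Complex.ofReal_im]
    push_cast; ring

lemma T_apply (u v : ℂ) (x : ℂ) : T u v x = x.re * u + x.im * v := rfl

lemma det_T (u v : ℂ) : LinearMap.det (T u v) = u.re * v.im - u.im * v.re := by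
  rw [← LinearMap.det_toMatrix Complex.basisOneI, Matrix.det_fin_two]
  simp [LinearMap.toMatrix_apply, T, Complex.coe_basisOneI_repr, Complex.coe_basisOneI]
  ring

section
variable {u v : ℂ}

lemma detT_ne (hΔ : u.re * v.im - u.im * v.re ≠ 0) : LinearMap.det (T u v) ≠ 0 := by
  rw [det_T]; exact hΔ

noncomputable def E (hΔ : u.re * v.im - u.im * v.re ≠ 0) : ℂ ≃ₗ[ℝ] ℂ :=
  (T u v).equivOfDetNeZero (detT_ne hΔ)

lemma coe_E (hΔ : u.re * v.im - u.im * v.re ≠ 0) : ⇑(E hΔ) = ⇑(T u v) := by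
  rw [← LinearEquiv.coe_coe, E]
  exact congrArg _ (LinearEquiv.coe_ofIsUnitDet _)

lemma T_bij (hΔ : u.re * v.im - u.im * v.re ≠ 0) : Function.Bijective (T u v) := by
  rw [← coe_E hΔ]; exact (E hΔ).bijective

/-- the fundamental half-open box -/
def box : Set ℂ := {z : ℂ | z.re ∈ Set.Ico (0:ℝ) 1 ∧ z.im ∈ Set.Ico (0:ℝ) 1}

lemma box_meas : MeasurableSet box :=
  (Complex.measurable_re measurableSet_Ico).inter (Complex.measurable_im measurableSet_Ico)

lemma volume_box : volume box = 1 := by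
  have h : box = Complex.measurableEquivRealProd ⁻¹' (Set.Ico (0:ℝ) 1 ×ˢ Set.Ico (0:ℝ) 1) := by
    ext z
    simp [box, Complex.measurableEquivRealProd, Complex.equivRealProd]
  rw [h, Complex.volume_preserving_equiv_real_prod.measure_preimage
    (measurableSet_Ico.prod measurableSet_Ico).nullMeasurableSet]
  rw [MeasureTheory.Measure.volume_eq_prod, MeasureTheory.Measure.prod_prod]
  simp

/-- fundamental domain -/
def P (u v : ℂ) : Set ℂ := T u v '' box

lemma P_meas (hΔ : u.re * v.im - u.im * v.re ≠ 0) : MeasurableSet (P u v) := by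
  have h : P u v = (E hΔ).symm ⁻¹' box := by
    rw [P, ← coe_E hΔ]; exact (E hΔ).image_eq_preimage_symm box
  rw [h]
  exact box_meas.preimage ((E hΔ).symm.toLinearMap.continuous_of_finiteDimensional.measurable)

lemma volume_P : volume (P u v) = ENNReal.ofReal |u.re * v.im - u.im * v.re| := by
  rw [P, MeasureTheory.Measure.addHaar_image_linearMap, det_T, volume_box, mul_one]

lemma abs_T_le {q : ℂ} (hq : q ∈ box) :
    ‖T u v q‖ ≤ ‖u‖ + ‖v‖ := by
  obtain ⟨⟨h1, h2⟩, ⟨h3, h4⟩⟩ := hq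
  have h5 : |q.re| ≤ 1 := by rw [abs_of_nonneg h1]; linarith
  have h6 : |q.im| ≤ 1 := by rw [abs_of_nonneg h3]; linarith
  rw [T_apply]
  calc ‖↑q.re * u + ↑q.im * v‖
      ≤ ‖↑q.re * u‖ + ‖↑q.im * v‖ := norm_add_le _ _
    _ = |q.re| * ‖u‖ + |q.im| * ‖v‖ := by
        simp [norm_mul]
    _ ≤ ‖u‖ + ‖v‖ :=
        add_le_add (mul_le_of_le_one_left (norm_nonneg u) h5)
          (mul_le_of_le_one_left (norm_nonneg v) h6)

lemma real_coords_inj (hΔ : u.re * v.im - u.im * v.re ≠ 0) {p q p' q' : ℝ}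
    (h : (p:ℂ) * u + q * v = p' * u + q' * v) : p = p' ∧ q = q' := by
  rw [Complex.ext_iff] at h
  obtain ⟨h1, h2⟩ := h
  simp only [Complex.add_re, Complex.add_im, Complex.mul_re, Complex.mul_im,
    Complex.ofReal_re, Complex.ofReal_im, zero_mul, mul_zero, sub_zero, zero_add, add_zero] at h1 h2
  constructor
  · have hp : (p - p') * (u.re * v.im - u.im * v.re) = 0 := by
      linear_combination v.im * h1 - v.re * h2
    have := (mul_eq_zero.1 hp).resolve_right hΔ
    linarith
  · have hq : (q - q') * (u.re * v.im - u.im * v.re) = 0 := by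
      linear_combination u.re * h2 - u.im * h1
    have := (mul_eq_zero.1 hq).resolve_right hΔ
    linarith

/-- translate of the fundamental domain -/
def Q (u v z : ℂ) : Set ℂ := (fun x => x - z) ⁻¹' P u v

lemma Q_meas (hΔ : u.re * v.im - u.im * v.re ≠ 0) (z : ℂ) : MeasurableSet (Q u v z) :=
  (P_meas hΔ).preimage (measurable_id.sub_const z)

lemma volume_Q (z : ℂ) : volume (Q u v z) = ENNReal.ofReal |u.re * v.im - u.im * v.re| := by
  have h : (fun x : ℂ => x - z) = (· + (-z)) := by funext x; ring
  rw [Q, h, measure_preimage_add_right, volume_P]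

lemma mem_Q {z x : ℂ} : x ∈ Q u v z ↔ x - z ∈ P u v := Iff.rfl

lemma cover (hΔ : u.re * v.im - u.im * v.re ≠ 0) (x : ℂ) : ∃ a b : ℤ,
    x ∈ Q u v ((a:ℂ) * u + b * v) ∧
    ‖(a:ℂ) * u + b * v‖ ≤ ‖x‖ + (‖u‖ + ‖v‖) := by
  obtain ⟨w, hw⟩ := (T_bij hΔ).2 x
  have hz : ((⌊w.re⌋:ℂ)) * u + (⌊w.im⌋:ℂ) * v = T u v (⟨(⌊w.re⌋:ℝ), (⌊w.im⌋:ℝ)⟩ : ℂ) := by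
    rw [T_apply]; push_cast; rfl
  have hp : x - ((⌊w.re⌋:ℂ) * u + (⌊w.im⌋:ℂ) * v) = T u v (w - ⟨(⌊w.re⌋:ℝ), (⌊w.im⌋:ℝ)⟩) := by
    rw [map_sub, ← hz, hw]
  have hpbox : (w - (⟨(⌊w.re⌋:ℝ), (⌊w.im⌋:ℝ)⟩ : ℂ)) ∈ box := by
    constructor
    · constructor
      · simpa using sub_nonneg.2 (Int.floor_le w.re)
      · simpa [Complex.sub_re] using Int.fract_lt_one w.re
    · constructor
      · simpa using sub_nonneg.2 (Int.floor_le w.im)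
      · simpa [Complex.sub_im] using Int.fract_lt_one w.im
  refine ⟨⌊w.re⌋, ⌊w.im⌋, ?_, ?_⟩
  · rw [mem_Q, hp]
    exact Set.mem_image_of_mem _ hpbox
  · have h1 : ‖(⌊w.re⌋:ℂ) * u + (⌊w.im⌋:ℂ) * v‖
        ≤ ‖x‖ + ‖x - ((⌊w.re⌋:ℂ) * u + (⌊w.im⌋:ℂ) * v)‖ := by
      have := norm_sub_le x (x - ((⌊w.re⌋:ℂ) * u + (⌊w.im⌋:ℂ) * v))
      simpa using this
    refine h1.trans ?_
    gcongr
    rw [hp]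
    exact abs_T_le hpbox

lemma disj (hΔ : u.re * v.im - u.im * v.re ≠ 0) {a b a' b' : ℤ}
    (hne : ((a:ℂ) * u + b * v) ≠ ((a':ℂ) * u + b' * v)) :
    Disjoint (Q u v ((a:ℂ) * u + b * v)) (Q u v ((a':ℂ) * u + b' * v)) := by
  rw [Set.disjoint_left]
  rintro x hx hx'
  rw [mem_Q] at hx hx'
  obtain ⟨q, hq, hTq⟩ := hx
  obtain ⟨q', hq', hTq'⟩ := hx'
  apply hne
  have hz : ((a:ℂ)) * u + (b:ℂ) * v = T u v (⟨(a:ℝ), (b:ℝ)⟩ : ℂ) := by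
    rw [T_apply]; push_cast; rfl
  have hz' : ((a':ℂ)) * u + (b':ℂ) * v = T u v (⟨(a':ℝ), (b':ℝ)⟩ : ℂ) := by
    rw [T_apply]; push_cast; rfl
  have hEq : T u v ((⟨(a:ℝ), (b:ℝ)⟩ : ℂ) + q) = T u v ((⟨(a':ℝ), (b':ℝ)⟩ : ℂ) + q') := by
    rw [map_add, map_add, ← hz, ← hz', hTq, hTq']
    ring
  have hinj := (T_bij hΔ).1 hEq
  have hre : (a:ℝ) + q.re = (a':ℝ) + q'.re := by
    have := congrArg Complex.re hinj
    simpa using this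
  have him : (b:ℝ) + q.im = (b':ℝ) + q'.im := by
    have := congrArg Complex.im hinj
    simpa using this
  obtain ⟨⟨hq1, hq2⟩, hq3, hq4⟩ := hq
  obtain ⟨⟨hq1', hq2'⟩, hq3', hq4'⟩ := hq'
  have ha : a = a' := by
    have h1 : |(a:ℝ) - a'| < 1 := by rw [abs_lt]; constructor <;> nlinarith
    have h2 : |a - a'| < 1 := by
      have h3 : ((|a - a'| : ℤ) : ℝ) < 1 := by push_cast; exact h1
      exact_mod_cast h3
    have := abs_lt.1 h2
    omega
  have hb : b = b' := by
    have h1 : |(b:ℝ) - b'| < 1 := by rw [abs_lt]; constructor <;> nlinarith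
    have h2 : |b - b'| < 1 := by
      have h3 : ((|b - b'| : ℤ) : ℝ) < 1 := by push_cast; exact h1
      exact_mod_cast h3
    have := abs_lt.1 h2
    omega
  rw [ha, hb]



lemma coeff_eq {z : ℂ} {a b : ℤ} (h : z = a * u + b * v) :
    (a:ℝ) * (u.re * v.im - u.im * v.re) = z.re * v.im - z.im * v.re ∧
    (b:ℝ) * (u.re * v.im - u.im * v.re) = z.im * u.re - z.re * u.im := by
  have h1 : z.re = (a:ℝ) * u.re + (b:ℝ) * v.re := by
    rw [h]
    simp [Complex.add_re, Complex.mul_re, Complex.intCast_re, Complex.intCast_im]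
  have h2 : z.im = (a:ℝ) * u.im + (b:ℝ) * v.im := by
    rw [h]
    simp [Complex.add_im, Complex.mul_im, Complex.intCast_re, Complex.intCast_im]
  constructor
  · linear_combination -v.im * h1 + v.re * h2
  · linear_combination -u.re * h2 + u.im * h1

lemma fin (hΔ : u.re * v.im - u.im * v.re ≠ 0) (r : ℝ) :
    {z : ℂ | (∃ a b : ℤ, z = a * u + b * v) ∧ ‖z‖ ≤ r}.Finite := by
  rcases lt_or_ge r 0 with hr | hr
  · convert Set.finite_empty
    ext z
    simp only [Set.mem_setOf_eq, Set.mem_empty_iff_false, iff_false, not_and]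
    intro _
    have := norm_nonneg z
    intro hc; linarith
  · set Δ := u.re * v.im - u.im * v.re with hΔdef
    have hΔpos : 0 < |Δ| := abs_pos.2 hΔ
    set K : ℝ := (r * (|v.re| + |v.im| + |u.re| + |u.im|)) / |Δ| with hK
    set M : ℤ := ⌈K⌉ with hM
    have hsub : {z : ℂ | (∃ a b : ℤ, z = a * u + b * v) ∧ ‖z‖ ≤ r} ⊆
        (fun p : ℤ × ℤ => (p.1 : ℂ) * u + (p.2 : ℂ) * v) ''
          (Set.Icc (-M) M ×ˢ Set.Icc (-M) M) := by
      rintro z ⟨⟨a, b, rfl⟩, hzr⟩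
      refine ⟨(a, b), ?_, rfl⟩
      set z : ℂ := (a:ℂ) * u + (b:ℂ) * v
      obtain ⟨ha, hb⟩ := coeff_eq (u := u) (v := v) (z := z) (a := a) (b := b) rfl
      have hre : |z.re| ≤ r := (Complex.abs_re_le_norm z).trans hzr
      have him : |z.im| ≤ r := (Complex.abs_im_le_norm z).trans hzr
      have haK : |(a:ℝ)| ≤ K := by
        rw [hK, le_div_iff₀ hΔpos, ← abs_mul, ha]
        calc |z.re * v.im - z.im * v.re| ≤ |z.re| * |v.im| + |z.im| * |v.re| := by
              calc |z.re * v.im - z.im * v.re| ≤ |z.re * v.im| + |z.im * v.re| := abs_sub _ _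
                _ = |z.re| * |v.im| + |z.im| * |v.re| := by rw [abs_mul, abs_mul]
          _ ≤ r * (|v.re| + |v.im| + |u.re| + |u.im|) := by
              nlinarith [abs_nonneg z.re, abs_nonneg z.im, abs_nonneg v.re, abs_nonneg v.im,
                abs_nonneg u.re, abs_nonneg u.im]
      have hbK : |(b:ℝ)| ≤ K := by
        rw [hK, le_div_iff₀ hΔpos, ← abs_mul, hb]
        calc |z.im * u.re - z.re * u.im| ≤ |z.im| * |u.re| + |z.re| * |u.im| := by
              calc |z.im * u.re - z.re * u.im| ≤ |z.im * u.re| + |z.re * u.im| := abs_sub _ _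
                _ = |z.im| * |u.re| + |z.re| * |u.im| := by rw [abs_mul, abs_mul]
          _ ≤ r * (|v.re| + |v.im| + |u.re| + |u.im|) := by
              nlinarith [abs_nonneg z.re, abs_nonneg z.im, abs_nonneg v.re, abs_nonneg v.im,
                abs_nonneg u.re, abs_nonneg u.im]
      have haM : |a| ≤ M := by
        have : ((|a| : ℤ) : ℝ) ≤ (M : ℝ) := by
          push_cast
          exact haK.trans (Int.le_ceil K)
        exact_mod_cast this
      have hbM : |b| ≤ M := by
        have : ((|b| : ℤ) : ℝ) ≤ (M : ℝ) := by
          push_cast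
          exact hbK.trans (Int.le_ceil K)
        exact_mod_cast this
      rw [Set.mem_prod]
      exact ⟨Set.mem_Icc.2 (abs_le.1 haM), Set.mem_Icc.2 (abs_le.1 hbM)⟩
    exact (((Set.finite_Icc _ _).prod (Set.finite_Icc _ _)).image _).subset hsub

lemma mem_Q_abs {u v z x : ℂ} (h : x ∈ Q u v z) :
    ‖x - z‖ ≤ ‖u‖ + ‖v‖ := by
  obtain ⟨q, hq, hTq⟩ := h
  have : x - z = T u v q := hTq.symm
  rw [this]
  exact abs_T_le hq

lemma count_upper (hΔ : u.re * v.im - u.im * v.re ≠ 0) {r : ℝ} (hr : 0 ≤ r) :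
    |u.re * v.im - u.im * v.re| *
      ({z : ℂ | (∃ a b : ℤ, z = a * u + b * v) ∧ ‖z‖ ≤ r}.ncard : ℝ)
      ≤ Real.pi * (r + (‖u‖ + ‖v‖)) ^ 2 := by
  set R := ‖u‖ + ‖v‖ with hR
  set S := {z : ℂ | (∃ a b : ℤ, z = a * u + b * v) ∧ ‖z‖ ≤ r} with hS
  have hfin := fin hΔ r
  have hcard : S.ncard = hfin.toFinset.card := Set.ncard_eq_toFinset_card S hfin
  have hdisjF : (↑hfin.toFinset : Set ℂ).PairwiseDisjoint (fun z => Q u v z) := by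
    intro z hz z' hz' hne
    rw [Finset.mem_coe, Set.Finite.mem_toFinset] at hz hz'
    obtain ⟨⟨a, b, rfl⟩, -⟩ := hz
    obtain ⟨⟨a', b', rfl⟩, -⟩ := hz'
    exact disj hΔ hne
  have hmeq : volume (⋃ z ∈ hfin.toFinset, Q u v z)
      = hfin.toFinset.card * ENNReal.ofReal |u.re * v.im - u.im * v.re| := by
    rw [measure_biUnion_finset hdisjF (fun z _ => Q_meas hΔ z)]
    simp only [volume_Q, Finset.sum_const, nsmul_eq_mul]
  have hsub : (⋃ z ∈ hfin.toFinset, Q u v z) ⊆ Metric.closedBall 0 (r + R) := by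
    intro x hx
    simp only [Set.mem_iUnion, exists_prop] at hx
    obtain ⟨z, hzF, hxz⟩ := hx
    rw [Set.Finite.mem_toFinset] at hzF
    obtain ⟨-, hzr⟩ := hzF
    have h1 : ‖x - z‖ ≤ R := mem_Q_abs hxz
    rw [Metric.mem_closedBall, dist_zero_right]
    calc ‖x‖ = ‖z + (x - z)‖ := by ring_nf
      _ ≤ ‖z‖ + ‖x - z‖ := norm_add_le _ _
      _ ≤ r + R := add_le_add hzr h1
  have hup : (hfin.toFinset.card : ℝ≥0∞) * ENNReal.ofReal |u.re * v.im - u.im * v.re|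
      ≤ ENNReal.ofReal (Real.pi * (r + R) ^ 2) := by
    rw [← hmeq]
    refine (measure_mono hsub).trans_eq ?_
    rw [Complex.volume_closedBall, ← ENNReal.ofReal_pow (by positivity),
      ← NNReal.coe_real_pi, ← ENNReal.ofReal_coe_nnreal,
      ← ENNReal.ofReal_mul (by positivity)]
    congr 1
    rw [NNReal.coe_real_pi]
    ring
  have hconv : ENNReal.ofReal (|u.re * v.im - u.im * v.re| * (S.ncard : ℝ))
      ≤ ENNReal.ofReal (Real.pi * (r + R) ^ 2) := by
    rw [ENNReal.ofReal_mul (abs_nonneg _), ENNReal.ofReal_natCast, hcard, mul_comm]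
    exact hup
  exact (ENNReal.ofReal_le_ofReal_iff (by positivity)).1 hconv

lemma count_lower (hΔ : u.re * v.im - u.im * v.re ≠ 0) {r : ℝ}
    (hrR : ‖u‖ + ‖v‖ ≤ r) :
    Real.pi * (r - (‖u‖ + ‖v‖)) ^ 2 ≤
      |u.re * v.im - u.im * v.re| *
      ({z : ℂ | (∃ a b : ℤ, z = a * u + b * v) ∧ ‖z‖ ≤ r}.ncard : ℝ) := by
  set R := ‖u‖ + ‖v‖ with hR
  have hR0 : 0 ≤ R := by positivity
  set S := {z : ℂ | (∃ a b : ℤ, z = a * u + b * v) ∧ ‖z‖ ≤ r} with hS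
  have hfin := fin hΔ r
  have hcard : S.ncard = hfin.toFinset.card := Set.ncard_eq_toFinset_card S hfin
  have hsub : Metric.closedBall (0:ℂ) (r - R) ⊆ ⋃ z ∈ hfin.toFinset, Q u v z := by
    intro x hx
    rw [Metric.mem_closedBall, dist_zero_right] at hx
    obtain ⟨a, b, hxQ, habs⟩ := cover hΔ x
    have hzS : ((a:ℂ) * u + b * v) ∈ S := by
      refine ⟨⟨a, b, rfl⟩, ?_⟩
      calc ‖(a:ℂ) * u + b * v‖ ≤ ‖x‖ + R := habs
        _ ≤ (r - R) + R := by linarith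
        _ = r := by ring
    simp only [Set.mem_iUnion, exists_prop]
    exact ⟨_, (Set.Finite.mem_toFinset hfin).2 hzS, hxQ⟩
  have hlow : ENNReal.ofReal (Real.pi * (r - R) ^ 2)
      ≤ (hfin.toFinset.card : ℝ≥0∞) * ENNReal.ofReal |u.re * v.im - u.im * v.re| := by
    have h1 : volume (Metric.closedBall (0:ℂ) (r - R)) = ENNReal.ofReal (Real.pi * (r - R) ^ 2) := by
      rw [Complex.volume_closedBall, ← ENNReal.ofReal_pow (by linarith),
        ← NNReal.coe_real_pi, ← ENNReal.ofReal_coe_nnreal,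
        ← ENNReal.ofReal_mul (by positivity)]
      congr 1
      rw [NNReal.coe_real_pi]
      ring
    calc ENNReal.ofReal (Real.pi * (r - R) ^ 2) = volume (Metric.closedBall (0:ℂ) (r - R)) :=
          h1.symm
      _ ≤ volume (⋃ z ∈ hfin.toFinset, Q u v z) := measure_mono hsub
      _ ≤ ∑ z ∈ hfin.toFinset, volume (Q u v z) := measure_biUnion_finset_le _ _
      _ = (hfin.toFinset.card : ℝ≥0∞) * ENNReal.ofReal |u.re * v.im - u.im * v.re| := by
          simp only [volume_Q, Finset.sum_const, nsmul_eq_mul]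
  have hconv : ENNReal.ofReal (Real.pi * (r - R) ^ 2)
      ≤ ENNReal.ofReal (|u.re * v.im - u.im * v.re| * (S.ncard : ℝ)) := by
    rw [ENNReal.ofReal_mul (abs_nonneg _), ENNReal.ofReal_natCast, hcard]
    exact hlow.trans_eq (mul_comm _ _)
  refine (ENNReal.ofReal_le_ofReal_iff (by positivity)).1 hconv


end
end Stmt13

open Stmt13 in

theorem stmt_13 (u v : ℂ) (d : ℝ) (hd : d = |u.re * v.im - u.im * v.re|)
    (hd0 : 0 < d) :
    (∃ C : ℝ, ∀ r : ℝ, 1 ≤ r →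
      |(({z : ℂ | (∃ a b : ℤ, z = a * u + b * v) ∧ ‖z‖ ≤ r}.ncard : ℝ)
          - Real.pi * r ^ 2 / d)| ≤ C * r) ∧
    Tendsto (fun r : ℝ =>
        ({z : ℂ | (∃ a b : ℤ, z = a * u + b * v) ∧ ‖z‖ ≤ r}.ncard : ℝ) / r ^ 2)
      atTop (nhds (Real.pi / d)) := by
  have hΔ : u.re * v.im - u.im * v.re ≠ 0 := by
    intro h
    rw [h, abs_zero] at hd
    exact hd0.ne' hd
  set R := ‖u‖ + ‖v‖ with hR
  have hR0 : 0 ≤ R := by positivity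
  have key : ∀ r : ℝ, 1 ≤ r →
      |(({z : ℂ | (∃ a b : ℤ, z = a * u + b * v) ∧ ‖z‖ ≤ r}.ncard : ℝ)
        - Real.pi * r ^ 2 / d)| ≤ (Real.pi * (2 * R + R ^ 2) / d) * r := by
    intro r hr
    have hr0 : (0:ℝ) ≤ r := by linarith
    set N : ℝ := ({z : ℂ | (∃ a b : ℤ, z = a * u + b * v) ∧ ‖z‖ ≤ r}.ncard : ℝ)
      with hN
    have hN0 : (0:ℝ) ≤ N := Nat.cast_nonneg _
    have hup := count_upper hΔ hr0
    rw [← hd, ← hN, ← hR] at hup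
    have hkey : |d * N - Real.pi * r ^ 2| ≤ Real.pi * (2 * R + R ^ 2) * r := by
      rw [abs_le]
      constructor
      · rcases le_or_gt R r with h | h
        · have hlo := count_lower hΔ h
          rw [← hd, ← hN, ← hR] at hlo
          nlinarith [Real.pi_pos, hR0, hr, sq_nonneg R,
            mul_nonneg (mul_nonneg Real.pi_pos.le (mul_nonneg hR0 hR0)) hr0]
        · nlinarith [Real.pi_pos, hR0, hr, mul_nonneg hd0.le hN0,
            mul_nonneg (mul_nonneg Real.pi_pos.le hR0) hr0]
      · nlinarith [Real.pi_pos, hR0, hr, sq_nonneg R,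
          mul_nonneg (mul_nonneg Real.pi_pos.le (mul_nonneg hR0 hR0)) hr0]
    have heq : N - Real.pi * r ^ 2 / d = (d * N - Real.pi * r ^ 2) / d := by
      field_simp
    rw [heq, abs_div, abs_of_pos hd0, div_mul_eq_mul_div]
    gcongr
  constructor
  · exact ⟨Real.pi * (2 * R + R ^ 2) / d, key⟩
  · have h0 : Tendsto (fun r : ℝ =>
        ({z : ℂ | (∃ a b : ℤ, z = a * u + b * v) ∧ ‖z‖ ≤ r}.ncard : ℝ) / r ^ 2
          - Real.pi / d) atTop (nhds 0) := by
      have hgt : Tendsto (fun r : ℝ => (Real.pi * (2 * R + R ^ 2) / d) / r) atTop (nhds 0) :=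
        tendsto_const_nhds.div_atTop tendsto_id
      refine squeeze_zero_norm' ?_ hgt
      · filter_upwards [eventually_ge_atTop (1:ℝ)] with r hr
        have hr0 : (0:ℝ) < r := lt_of_lt_of_le one_pos hr
        set N : ℝ := ({z : ℂ | (∃ a b : ℤ, z = a * u + b * v) ∧ ‖z‖ ≤ r}.ncard : ℝ)
        have heq2 : N / r ^ 2 - Real.pi / d = (N - Real.pi * r ^ 2 / d) / r ^ 2 := by
          field_simp
        rw [Real.norm_eq_abs, heq2, abs_div, abs_of_pos (by positivity : (0:ℝ) < r ^ 2)]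
        have hstep : |N - Real.pi * r ^ 2 / d| / r ^ 2
            ≤ ((Real.pi * (2 * R + R ^ 2) / d) * r) / r ^ 2 := by
          gcongr
          exact key r hr
        refine hstep.trans_eq ?_
        field_simp
    have h1 := h0.add_const (Real.pi / d)
    simpa using h1
end
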